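/- Let b > 0, Ω ≥ 0 and let m ≥ 1 be an integer. Then for every real y, (1/(2b)) · (2bm/(2bm+Ω))^m · exp(−y/(2b)) · ∑'_{n=0}^{∞} (m)_n · (Ω y/(2b(2bm+Ω)))^n / (n!)² = (1/(2b)) · (2bm/(2bm+Ω))^m · exp(−m y/(2bm+Ω)) · ∑_{i=0}^{m−1} [(m−1)! / ((m−1−i)! · (i!)²)] · (Ω y/(2b(2bm+Ω)))^i. That is, for integer fading order m the squared shadowed-Rician probability density, originally expressed through the confluent hypergeometric series, equals a finite algebraic closed form. -/

import Mathlib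

/-- The rising factorial (Pochhammer symbol): `(m)_n = m·(m+1)···(m+n−1)`, with `(m)_0 = 1`. -/
def risingFactorial (m : ℕ) : ℕ → ℕ
  | 0 => 1
  | n + 1 => risingFactorial m n * (m + n)

open Finset
lemma risingFactorial_eq_ascFactorial (m n : ℕ) :
    risingFactorial m n = m.ascFactorial n := by
  induction n with
  | zero => rfl
  | succ n ih => rw [risingFactorial, Nat.ascFactorial_succ, ih, Nat.mul_comm]

lemma risingFactorial_eq_choose_mul (m n : ℕ) :
    risingFactorial m n = n.factorial * (m + n - 1).choose n := by
  rw [risingFactorial_eq_ascFactorial, Nat.ascFactorial_eq_factorial_mul_choose']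

lemma vandermonde' (m n : ℕ) (hm : 1 ≤ m) :
    ∑ i ∈ Finset.range m, (m - 1).choose i * n.choose i = (m + n - 1).choose n := by
  have h1 : m + n - 1 = (m - 1) + n := by omega
  rw [h1, Nat.add_choose_eq, Finset.Nat.sum_antidiagonal_eq_sum_range_succ
    (f := fun i j => (m-1).choose i * n.choose j)]
  have e1 : ∑ i ∈ range m, (m-1).choose i * n.choose i
      = ∑ i ∈ range (m+n+1), (m-1).choose i * n.choose i := by
    refine Finset.sum_subset (Finset.range_subset_range.mpr (by omega)) ?_
    intro i _ hi
    rw [Finset.mem_range, not_lt] at hi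
    rw [Nat.choose_eq_zero_of_lt (by omega), Nat.zero_mul]
  have e2 : ∑ i ∈ range (n+1), (m-1).choose i * n.choose (n - i)
      = ∑ i ∈ range (m+n+1), (m-1).choose i * n.choose i := by
    have : ∀ i ∈ range (n+1), (m-1).choose i * n.choose (n - i)
        = (m-1).choose i * n.choose i := by
      intro i hi
      rw [Finset.mem_range] at hi
      rw [Nat.choose_symm (by omega)]
    rw [Finset.sum_congr rfl this]
    refine Finset.sum_subset (Finset.range_subset_range.mpr (by omega)) ?_
    intro i _ hi
    rw [Finset.mem_range, not_lt] at hi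
    rw [Nat.choose_eq_zero_of_lt (show n < i by omega), Nat.mul_zero]
  rw [e1, e2]

lemma exp_tsum (z : ℝ) : ∑' n : ℕ, z ^ n / (Nat.factorial n : ℝ) = Real.exp z := by
  rw [Real.exp_eq_exp_ℝ, NormedSpace.exp_eq_tsum_div]

lemma series_eq (m : ℕ) (hm : 1 ≤ m) (z : ℝ) :
    ∑' n : ℕ, (risingFactorial m n : ℝ) * z ^ n / ((Nat.factorial n : ℝ)) ^ 2
      = Real.exp z * ∑ i ∈ Finset.range m,
          ((Nat.factorial (m - 1) : ℝ) /
              ((Nat.factorial (m - 1 - i) : ℝ) * (Nat.factorial i : ℝ) ^ 2)) * z ^ i := by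
  set c : ℕ → ℝ := fun i => (Nat.factorial (m - 1) : ℝ) /
      ((Nat.factorial (m - 1 - i) : ℝ) * (Nat.factorial i : ℝ) ^ 2) with hc
  set f : ℕ → ℕ → ℝ := fun i n =>
      if i ≤ n then c i * z ^ n / (Nat.factorial (n - i) : ℝ) else 0 with hfdef
  have hshift : ∀ i n : ℕ, f i (n + i) = (c i * z ^ i) * (z ^ n / (Nat.factorial n : ℝ)) := by
    intro i n
    simp only [hfdef, if_pos (Nat.le_add_left i n), Nat.add_sub_cancel]
    rw [pow_add]
    ring
  have hf : ∀ i : ℕ, Summable (f i) := by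
    intro i
    rw [← summable_nat_add_iff i]
    simp only [hshift]
    exact (Real.summable_pow_div_factorial z).mul_left _
  have htsum : ∀ i : ℕ, ∑' n, f i n = c i * z ^ i * Real.exp z := by
    intro i
    rw [← Summable.sum_add_tsum_nat_add i (hf i)]
    have h0 : ∑ n ∈ range i, f i n = 0 := by
      refine Finset.sum_eq_zero fun n hn => ?_
      rw [Finset.mem_range] at hn
      simp [hfdef, Nat.not_le.mpr hn]
    simp only [hshift, h0, zero_add]
    rw [tsum_mul_left, exp_tsum]
  have hterm : ∀ n : ℕ, ∑ i ∈ range m, f i n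
      = (risingFactorial m n : ℝ) * z ^ n / ((Nat.factorial n : ℝ)) ^ 2 := by
    intro n
    have step : ∀ i ∈ range m, f i n
        = (((m - 1).choose i * n.choose i : ℕ) : ℝ) / (Nat.factorial n : ℝ) * z ^ n := by
      intro i hi
      rw [Finset.mem_range] at hi
      by_cases hin : i ≤ n
      · simp only [hfdef, if_pos hin, hc]
        rw [Nat.cast_mul, Nat.cast_choose ℝ (show i ≤ m - 1 by omega),
          Nat.cast_choose ℝ hin]
        have h1 : (Nat.factorial (m - 1 - i) : ℝ) ≠ 0 := Nat.cast_ne_zero.mpr (Nat.factorial_ne_zero _)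
        have h2 : (Nat.factorial i : ℝ) ≠ 0 := Nat.cast_ne_zero.mpr (Nat.factorial_ne_zero _)
        have h3 : (Nat.factorial (n - i) : ℝ) ≠ 0 := Nat.cast_ne_zero.mpr (Nat.factorial_ne_zero _)
        have h4 : (Nat.factorial n : ℝ) ≠ 0 := Nat.cast_ne_zero.mpr (Nat.factorial_ne_zero _)
        field_simp
      · simp [hfdef, if_neg hin, Nat.choose_eq_zero_of_lt (show n < i by omega)]
    rw [Finset.sum_congr rfl step, ← Finset.sum_mul, ← Finset.sum_div, ← Nat.cast_sum,
      vandermonde' m n hm, risingFactorial_eq_choose_mul, Nat.cast_mul]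
    have h4 : (Nat.factorial n : ℝ) ≠ 0 := Nat.cast_ne_zero.mpr (Nat.factorial_ne_zero _)
    field_simp
  calc ∑' n : ℕ, (risingFactorial m n : ℝ) * z ^ n / ((Nat.factorial n : ℝ)) ^ 2
      = ∑' n : ℕ, ∑ i ∈ range m, f i n := by
        exact tsum_congr fun n => (hterm n).symm
    _ = ∑ i ∈ range m, ∑' n, f i n := Summable.tsum_finsetSum fun i _ => hf i
    _ = ∑ i ∈ range m, c i * z ^ i * Real.exp z := Finset.sum_congr rfl fun i _ => htsum i
    _ = Real.exp z * ∑ i ∈ range m, c i * z ^ i := by rw [← Finset.sum_mul, mul_comm]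

/-- For integer fading order `m ≥ 1`, the squared shadowed-Rician density, originally
expressed through the confluent hypergeometric series
`₁F₁(m,1,z) = ∑_n (m)_n z^n/(n!)²` evaluated at `z = Ωy/(2b(2bm+Ω))`,
equals a finite algebraic closed form. -/
theorem ssr_pdf_integer_order_closed_form (b Ω : ℝ) (hb : 0 < b) (hΩ : 0 ≤ Ω)
    (m : ℕ) (hm : 1 ≤ m) (y : ℝ) :
    (1 / (2 * b)) * (2 * b * m / (2 * b * m + Ω)) ^ m * Real.exp (-y / (2 * b)) *
        ∑' n : ℕ, (risingFactorial m n : ℝ) *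
            (Ω * y / (2 * b * (2 * b * m + Ω))) ^ n / ((Nat.factorial n : ℝ)) ^ 2
      = (1 / (2 * b)) * (2 * b * m / (2 * b * m + Ω)) ^ m *
          Real.exp (-(m * y) / (2 * b * m + Ω)) *
          ∑ i ∈ Finset.range m,
            ((Nat.factorial (m - 1) : ℝ) /
                ((Nat.factorial (m - 1 - i) : ℝ) * (Nat.factorial i : ℝ) ^ 2)) *
              (Ω * y / (2 * b * (2 * b * m + Ω))) ^ i := by
  have hm1 : (1 : ℝ) ≤ (m : ℝ) := by exact_mod_cast hm
  have hden : 2 * b * (m : ℝ) + Ω ≠ 0 := by positivity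
  have hb' : (2 : ℝ) * b ≠ 0 := by positivity
  rw [series_eq m hm (Ω * y / (2 * b * (2 * b * m + Ω)))]
  have hexp : Real.exp (-y / (2 * b)) * Real.exp (Ω * y / (2 * b * (2 * b * m + Ω)))
      = Real.exp (-((m : ℝ) * y) / (2 * b * m + Ω)) := by
    rw [← Real.exp_add]
    congr 1
    field_simp
    ring
  rw [← hexp]
  ring
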